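/- There exists δ ≥ 0 such that the metric d_Y on F satisfies the four-point Gromov hyperbolicity condition: for all x, y, z, t ∈ F, d_Y(x,y) + d_Y(z,t) ≤ max(d_Y(x,z) + d_Y(y,t), d_Y(x,t) + d_Y(y,z)) + δ. (The graph Y is Gromov-hyperbolic.) -/

import Mathlib

set_option linter.unusedSectionVars false
set_option maxHeartbeats 1000000


open FreeGroup Filter

namespace PurelyLox

abbrev F : Type := FreeGroup (Fin 3)

def a : F := FreeGroup.of 0
def b : F := FreeGroup.of 1
def c : F := FreeGroup.of 2

/-- The subgroup generated by `a` and `b`. -/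
def H : Subgroup F := Subgroup.closure {a, b}

/-- `g` is a positive word in the generators `a` and `b`. -/
def PosAB (g : F) : Prop :=
  ∀ x ∈ g.toWord, x.2 = true ∧ x.1 ≠ 2

/-- A word is 7-aperiodic: it contains no subword `u^7` with `u` nonempty. -/
def Aperiodic7 {β : Type*} (w : List β) : Prop :=
  ¬ ∃ u : List β, u ≠ [] ∧ (List.flatten (List.replicate 7 u)) <:+: w

/-- The data of the fixed sequence `(v n)` of positive 7-aperiodic words in `a,b`,
with pairwise distinct lengths tending to infinity. -/
structure VSeq where
  v : ℕ → F
  pos : ∀ n, PosAB (v n)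
  len_ne : ∀ m n, m ≠ n → ((v m).toWord.length ≠ (v n).toWord.length)
  len_tendsto : Tendsto (fun n => (v n).toWord.length) atTop atTop
  aperiodic : ∀ n, Aperiodic7 (v n).toWord

/-- `w n = v n * c`. -/
def VSeq.w (V : VSeq) (n : ℕ) : F := V.v n * c

/-- `z` is a `W`-word: nontrivial, and its reduced word is a subword of
the reduced word of `(w n)^m` for some `n` and some `m ≠ 0`. -/
def VSeq.IsW (V : VSeq) (z : F) : Prop :=
  z ≠ 1 ∧ ∃ (n : ℕ) (m : ℤ), m ≠ 0 ∧ z.toWord <:+: ((V.w n) ^ m).toWord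

/-- `|g|_Y`: the least `k` such that `g` is a product of `k` `W`-words. -/
noncomputable def VSeq.normY (V : VSeq) (g : F) : ℕ :=
  sInf {k | ∃ l : List F, l.length = k ∧ (∀ z ∈ l, V.IsW z) ∧ l.prod = g}

/-- The vertex distance in the graph `Y`. -/
noncomputable def VSeq.dY (V : VSeq) (x y : F) : ℕ := V.normY (x⁻¹ * y)

/-- The product `u * v` is without cancellation. -/
def NoCancel (u v : F) : Prop := (u * v).toWord = u.toWord ++ v.toWord

/-- `p 0, p 1, …, p k` is a `d_Y`-geodesic from `x` to `y`. -/
def VSeq.IsGeodesic (V : VSeq) (x y : F) (k : ℕ) (p : ℕ → F) : Prop :=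
  p 0 = x ∧ p k = y ∧ (∀ i < k, V.dY (p i) (p (i + 1)) = 1) ∧ k = V.dY x y

/-- `g` is cyclically reduced. -/
def CyclicallyReduced (g : F) : Prop := (g * g).toWord = g.toWord ++ g.toWord

/-- `g` is root-free. -/
def RootFree (g : F) : Prop := ∀ (x : F) (s : ℤ), 2 ≤ |s| → g ≠ x ^ s



section Helpers

section WordLemmas
variable {α : Type*} [DecidableEq α]



/-- Reduced words. -/
def Rd (L : List (α × Bool)) : Prop := FreeGroup.reduce L = L

/-- The no-cancellation relation on adjacent letters. -/
def RdRel (p q : α × Bool) : Prop := q ≠ (p.1, !p.2)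

theorem rd_of_chain' {L : List (α × Bool)} (h : List.Chain' RdRel L) : Rd L := by
  induction L with
  | nil => rfl
  | cons x L ih =>
    have hL : Rd L := ih h.tail
    unfold Rd at hL ⊢
    rw [reduce.cons, hL]
    cases L with
    | nil => rfl
    | cons hd tl =>
      have hne : RdRel x hd := (List.isChain_cons_cons.1 h).1
      have : ¬ (x.1 = hd.1 ∧ x.2 = !hd.2) := by
        rintro ⟨h1, h2⟩
        exact hne (by apply Prod.ext <;> simp [h1, h2])
      simp [this]

theorem exists_of_not_chain' {R : α × Bool → α × Bool → Prop} {L : List (α × Bool)}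
    (h : ¬ List.Chain' R L) :
    ∃ A p q B, L = A ++ p :: q :: B ∧ ¬ R p q := by
  induction L with
  | nil => exact absurd List.isChain_nil h
  | cons x L ih =>
    cases L with
    | nil => exact absurd (List.isChain_singleton x) h
    | cons y L =>
      simp only [List.Chain', List.isChain_cons_cons] at h
      by_cases hxy : R x y
      · have : ¬ List.Chain' R (y :: L) := fun hc => h ⟨hxy, hc⟩
        obtain ⟨A, p, q, B, hAB, hR⟩ := ih this
        exact ⟨x :: A, p, q, B, by rw [hAB]; rfl, hR⟩
      · exact ⟨[], x, y, L, rfl, hxy⟩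

theorem chain'_of_rd {L : List (α × Bool)} (h : Rd L) : List.Chain' RdRel L := by
  by_contra hc
  obtain ⟨A, p, q, B, hAB, hR⟩ := exists_of_not_chain' hc
  have hq : q = (p.1, !p.2) := not_not.1 fun hne => hR hne
  have : reduce L = A ++ (p.1, p.2) :: (p.1, !p.2) :: B := by
    rw [h, hAB, hq]
  exact reduce.not this

theorem rd_toWord (x : FreeGroup α) : Rd x.toWord := reduce_toWord x

theorem toWord_mk_rd {L : List (α × Bool)} (h : Rd L) : (FreeGroup.mk L).toWord = L := by
  rw [toWord_mk]; exact h

theorem rd_infix {L M : List (α × Bool)} (h : Rd L) (hm : M <:+: L) : Rd M := by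
  obtain ⟨s, t, hst⟩ := hm
  have hc := chain'_of_rd h
  rw [← hst] at hc
  have h2 := (List.isChain_append.1 hc).1
  exact rd_of_chain' (List.isChain_append.1 h2).2.1

theorem rd_invRev {L : List (α × Bool)} (h : Rd L) : Rd (invRev L) := by
  unfold Rd
  rw [reduce_invRev, h]

theorem infix_invRev {L M : List (α × Bool)} (hm : M <:+: L) : invRev M <:+: invRev L := by
  obtain ⟨s, t, hst⟩ := hm
  refine ⟨invRev t, invRev s, ?_⟩
  rw [← hst]
  simp [invRev, List.reverse_append]

theorem invRev_append (L₁ L₂ : List (α × Bool)) :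
    invRev (L₁ ++ L₂) = invRev L₂ ++ invRev L₁ := by
  simp [invRev]

theorem invRev_singleton (p : α × Bool) : invRev [p] = [(p.1, !p.2)] := rfl

/-- The fundamental cancellation lemma. -/
theorem cancel : ∀ {L₂ L₁ : List (α × Bool)}, Rd L₁ → Rd L₂ →
    ∃ U W V, L₁ = U ++ W ∧ L₂ = invRev W ++ V ∧ reduce (L₁ ++ L₂) = U ++ V := by
  intro L₂
  induction L₂ with
  | nil =>
    intro L₁ h1 _
    exact ⟨L₁, [], [], by simp, by simp [invRev], by rw [List.append_nil]; exact h1⟩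
  | cons y L₂' ih =>
    intro L₁ h1 h2
    by_cases hl : L₁.getLast? = some (y.1, !y.2)
    · have hne : L₁ ≠ [] := by rintro rfl; simp at hl
      have hL1 : L₁ = L₁.dropLast ++ [(y.1, !y.2)] := by
        conv_lhs => rw [← List.dropLast_append_getLast hne]
        rw [List.getLast?_eq_getLast hne] at hl
        rw [Option.some_inj.1 hl]
      have hM : Rd L₁.dropLast := rd_infix h1 ((List.dropLast_prefix L₁).isInfix)
      have hL2' : Rd L₂' := rd_of_chain' (chain'_of_rd h2).tail
      obtain ⟨U, W, V, hU, hW, hV⟩ := ih hM hL2'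
      refine ⟨U, W ++ [(y.1, !y.2)], V, ?_, ?_, ?_⟩
      · rw [hL1, hU, List.append_assoc]
      · rw [invRev_append, invRev_singleton]
        simp only [Bool.not_not]
        rw [hW]; rfl
      · have step : FreeGroup.mk (L₁ ++ y :: L₂') = FreeGroup.mk (L₁.dropLast ++ L₂') := by
          conv_lhs => rw [hL1]
          have he : (L₁.dropLast ++ [(y.1, !y.2)]) ++ y :: L₂'
              = L₁.dropLast ++ ((y.1, !y.2) :: (y.1, y.2) :: L₂') := by simp
          rw [he, ← mul_mk, ← mul_mk (L₁ := L₁.dropLast)]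
          congr 1
          exact Quot.sound (Red.Step.cons_not_rev)
        have : reduce (L₁ ++ y :: L₂') = reduce (L₁.dropLast ++ L₂') := reduce.sound step
        rw [this, hV]
    · refine ⟨L₁, [], y :: L₂', by simp, by simp [invRev], ?_⟩
      apply rd_of_chain'
      apply List.IsChain.append (chain'_of_rd h1) (chain'_of_rd h2)
      intro p hp q hq
      simp only [List.head?_cons, Option.mem_def, Option.some_inj] at hq
      subst hq
      simp only [RdRel, ne_eq]
      intro hEq
      apply hl
      rw [Option.mem_def] at hp
      rw [hp]
      congr 1
      apply Prod.ext
      · exact (congrArg Prod.fst hEq).symm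
      · have h2' := congrArg Prod.snd hEq
        simp only at h2' ⊢
        rw [h2']
        simp




/-- Longest common prefix. -/
def lcp {β : Type*} [DecidableEq β] : List β → List β → List β
  | x :: s, y :: t => if x = y then x :: lcp s t else []
  | _, _ => []

theorem lcp_prefix_left {β : Type*} [DecidableEq β] : ∀ s t : List β, lcp s t <+: s := by
  intro s
  induction s with
  | nil => intro t; cases t <;> exact List.nil_prefix
  | cons x s ih =>
    intro t
    cases t with
    | nil => exact List.nil_prefix
    | cons y t =>
      by_cases h : x = y
      · simp only [lcp, if_pos h]
        obtain ⟨r, hr⟩ := ih t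
        exact ⟨r, by rw [List.cons_append, hr]⟩
      · simp only [lcp, if_neg h]
        exact List.nil_prefix

theorem lcp_prefix_right {β : Type*} [DecidableEq β] : ∀ s t : List β, lcp s t <+: t := by
  intro s
  induction s with
  | nil => intro t; cases t <;> exact List.nil_prefix
  | cons x s ih =>
    intro t
    cases t with
    | nil => exact List.nil_prefix
    | cons y t =>
      by_cases h : x = y
      · simp only [lcp, if_pos h]
        subst h
        obtain ⟨r, hr⟩ := ih t
        exact ⟨r, by rw [List.cons_append, hr]⟩
      · simp only [lcp, if_neg h]
        exact List.nil_prefix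

theorem lcp_head_ne {β : Type*} [DecidableEq β] :
    ∀ s t : List β, ∀ p q : β,
      (s.drop (lcp s t).length).head? = some p →
      (t.drop (lcp s t).length).head? = some q → p ≠ q := by
  intro s
  induction s with
  | nil => intro t p q hp _; simp at hp
  | cons x s ih =>
    intro t p q hp hq
    cases t with
    | nil => simp [lcp] at hq
    | cons y t =>
      by_cases h : x = y
      · simp only [lcp, if_pos h, List.length_cons, List.drop_succ_cons] at hp hq
        exact ih t p q hp hq
      · simp only [lcp, if_neg h, List.length_nil, List.drop_zero, List.head?_cons,
          Option.some_inj] at hp hq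
        rw [hp, hq] at h
        exact h



theorem rd_invRev_append {X Y : List (α × Bool)} (hX : Rd X) (hY : Rd Y)
    (hne : ∀ p q : α × Bool, X.head? = some p → Y.head? = some q → p ≠ q) :
    Rd (invRev X ++ Y) := by
  apply rd_of_chain'
  apply List.IsChain.append (chain'_of_rd (rd_invRev hX)) (chain'_of_rd hY)
  intro p hp q hq
  rw [Option.mem_def] at hp hq
  have : (invRev X).getLast? = X.head?.map (fun g => (g.1, !g.2)) := by
    unfold invRev
    rw [List.getLast?_reverse, List.head?_map]
  rw [this] at hp
  cases hX' : X.head? with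
  | none => rw [hX'] at hp; simp at hp
  | some x₀ =>
    rw [hX'] at hp
    simp only [Option.map_some, Option.some_inj] at hp
    have hne' : x₀ ≠ q := hne x₀ q hX' hq
    simp only [RdRel, ne_eq, ← hp]
    simp only [Bool.not_not]
    intro hEq
    exact hne' (by rw [hEq])

theorem inv_mul_mk_drop {U w : List (α × Bool)} {i : ℕ} (h : U.take i = w.take i) :
    (FreeGroup.mk U)⁻¹ * FreeGroup.mk w = FreeGroup.mk (invRev (U.drop i) ++ w.drop i) := by
  conv_lhs => rw [← List.take_append_drop i U, ← List.take_append_drop i w]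
  rw [← mul_mk, ← mul_mk, h, mul_inv_rev, mul_assoc, inv_mul_cancel_left, inv_mk, mul_mk]


end WordLemmas


section norms

variable (V : VSeq)

theorem fin3_cases {i : Fin 3} (h2 : i ≠ 2) : i = 0 ∨ i = 1 := by
  fin_cases i <;> simp_all

theorem toWord_w (n : ℕ) : (V.w n).toWord = (V.v n).toWord ++ [((2 : Fin 3), true)] := by
  have hc : c = FreeGroup.mk [((2 : Fin 3), true)] := rfl
  have h1 : V.w n = FreeGroup.mk ((V.v n).toWord ++ [((2 : Fin 3), true)]) := by
    rw [VSeq.w, hc]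
    conv_lhs => rw [← mk_toWord (x := V.v n)]
    rw [mul_mk]
  rw [h1]
  apply toWord_mk_rd
  apply rd_of_chain'
  apply List.IsChain.append (chain'_of_rd (rd_toWord (V.v n))) (List.isChain_singleton _)
  intro p hp q hq
  simp only [List.head?_cons, Option.mem_def, Option.some_inj] at hq
  subst hq
  have hmem : p ∈ (V.v n).toWord := by
    obtain ⟨hne', hpe⟩ := List.mem_getLast?_eq_getLast hp
    exact hpe ▸ List.getLast_mem hne' 
  have hpos := V.pos n p hmem
  simp only [RdRel, ne_eq]
  intro hEq
  have := congrArg Prod.snd hEq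
  simp [hpos.1] at this

theorem exists_good_n : ∃ n, ((0 : Fin 3), true) ∈ (V.v n).toWord ∧
    ((1 : Fin 3), true) ∈ (V.v n).toWord := by
  obtain ⟨n, hn⟩ := (V.len_tendsto.eventually_ge_atTop 7).exists
  have key : ∀ i j : Fin 3, i ≠ 2 → j ≠ 2 → i ≠ j →
      (∀ x ∈ (V.v n).toWord, x.1 ≠ j) → False := by
    intro i j hi2 hj2 hij hall
    apply V.aperiodic n
    refine ⟨[(i, true)], by simp, ?_⟩
    have hrep : (V.v n).toWord = List.replicate (V.v n).toWord.length (i, true) := by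
      apply List.eq_replicate_of_mem
      intro x hx
      have hpos := V.pos n x hx
      have hx1 : x.1 = i := by
        rcases fin3_cases hpos.2 with h | h <;> rcases fin3_cases hi2 with h' | h' <;>
          rcases fin3_cases hj2 with h'' | h'' <;>
            first
              | (exact h.trans h'.symm)
              | (exfalso; exact hall x hx (h.trans h''.symm))
              | (exfalso; exact hij (h'.trans h''.symm))
      rw [← Prod.mk.eta (p := x), hx1, hpos.1]
    rw [hrep]
    have hfl : List.flatten (List.replicate 7 [(i, true)]) = List.replicate 7 (i, true) := by
      simp
    rw [hfl]
    apply List.IsPrefix.isInfix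
    refine ⟨List.replicate ((V.v n).toWord.length - 7) (i, true), ?_⟩
    rw [← List.replicate_add]
    congr 1
    omega
  refine ⟨n, ?_, ?_⟩
  · by_contra hmem
    exact key 1 0 (by decide) (by decide) (by decide) (fun x hx h0 => hmem (by
        have hpos := V.pos n x hx
        rw [← Prod.mk.eta (p := x), h0, hpos.1] at hx; exact hx))
  · by_contra hmem
    exact key 0 1 (by decide) (by decide) (by decide) (fun x hx h1 => hmem (by
        have hpos := V.pos n x hx
        rw [← Prod.mk.eta (p := x), h1, hpos.1] at hx; exact hx))

theorem isW_single (x : Fin 3 × Bool) : V.IsW (FreeGroup.mk [x]) := by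
  obtain ⟨n, h0, h1⟩ := exists_good_n V
  have hrdx : Rd [x] := reduce_singleton x
  have htw : (FreeGroup.mk [x]).toWord = [x] := toWord_mk_rd hrdx
  have hne1 : FreeGroup.mk [x] ≠ 1 := by
    intro h
    have := htw.symm.trans (by rw [h, toWord_one])
    simp at this
  have hpos : ∀ i : Fin 3, [((i : Fin 3), true)] <:+: (V.w n).toWord := by
    intro i
    rw [toWord_w]
    fin_cases i
    · obtain ⟨s, t, hst⟩ := List.append_of_mem h0
      exact ⟨s, t ++ [((2 : Fin 3), true)], by simp [hst]⟩
    · obtain ⟨s, t, hst⟩ := List.append_of_mem h1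
      exact ⟨s, t ++ [((2 : Fin 3), true)], by simp [hst]⟩
    · exact ⟨(V.v n).toWord, [], by simp⟩
  rcases x with ⟨i, bb⟩
  cases bb
  · refine ⟨hne1, n, -1, by norm_num, ?_⟩
    rw [htw]
    have : ((V.w n) ^ (-1 : ℤ)) = (V.w n)⁻¹ := by rw [zpow_neg, zpow_one]
    rw [this, toWord_inv]
    have : [(i, false)] = invRev [(i, true)] := rfl
    rw [this]
    exact infix_invRev (hpos i)
  · refine ⟨hne1, n, 1, one_ne_zero, ?_⟩
    rw [htw]
    have : ((V.w n) ^ (1 : ℤ)) = V.w n := zpow_one _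
    rw [this]
    exact hpos i

theorem exists_decomp (g : F) : ∃ l : List F, (∀ z ∈ l, V.IsW z) ∧ l.prod = g := by
  have : ∀ L : List (Fin 3 × Bool), ∃ l : List F, (∀ z ∈ l, V.IsW z) ∧
      l.prod = FreeGroup.mk L := by
    intro L
    induction L with
    | nil => exact ⟨[], by simp, by simp [← one_eq_mk]⟩
    | cons x L ih =>
      obtain ⟨l, hW, hprod⟩ := ih
      refine ⟨FreeGroup.mk [x] :: l, ?_, ?_⟩
      · intro z hz
        rcases List.mem_cons.1 hz with h | h
        · rw [h]; exact isW_single V x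
        · exact hW z h
      · rw [List.prod_cons, hprod, mul_mk]
        rfl
  obtain ⟨l, hW, hprod⟩ := this g.toWord
  exact ⟨l, hW, by rw [hprod, mk_toWord]⟩

theorem wset_nonempty (g : F) :
    {k | ∃ l : List F, l.length = k ∧ (∀ z ∈ l, V.IsW z) ∧ l.prod = g}.Nonempty := by
  obtain ⟨l, hW, hprod⟩ := exists_decomp V g
  exact ⟨l.length, l, rfl, hW, hprod⟩

theorem exists_min (g : F) : ∃ l : List F, l.length = V.normY g ∧ (∀ z ∈ l, V.IsW z) ∧
    l.prod = g :=
  Nat.sInf_mem (wset_nonempty V g)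

theorem normY_le {g : F} {k : ℕ} (h : ∃ l : List F, l.length ≤ k ∧ (∀ z ∈ l, V.IsW z) ∧
    l.prod = g) : V.normY g ≤ k := by
  obtain ⟨l, hlen, hW, hprod⟩ := h
  exact le_trans (Nat.sInf_le ⟨l, rfl, hW, hprod⟩) hlen

theorem normY_one : V.normY 1 = 0 :=
  Nat.le_zero.1 (normY_le V ⟨[], by simp, by simp, by simp⟩)

theorem normY_mul_le (g h : F) : V.normY (g * h) ≤ V.normY g + V.normY h := by
  obtain ⟨lg, hg1, hg2, hg3⟩ := exists_min V g
  obtain ⟨lh, hh1, hh2, hh3⟩ := exists_min V h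
  apply normY_le
  refine ⟨lg ++ lh, by rw [List.length_append, hg1, hh1], ?_, by rw [List.prod_append, hg3, hh3]⟩
  intro z hz
  rcases List.mem_append.1 hz with h | h
  · exact hg2 z h
  · exact hh2 z h

theorem isW_inv {z : F} (h : V.IsW z) : V.IsW z⁻¹ := by
  obtain ⟨hne, n, m, hm, hinf⟩ := h
  refine ⟨inv_ne_one.2 hne, n, -m, neg_ne_zero.2 hm, ?_⟩
  rw [toWord_inv, zpow_neg, toWord_inv]
  exact infix_invRev hinf

theorem normY_inv_le (g : F) : V.normY g⁻¹ ≤ V.normY g := by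
  obtain ⟨l, h1, h2, h3⟩ := exists_min V g
  apply normY_le
  refine ⟨(l.map fun x => x⁻¹).reverse, by simp [h1], ?_, ?_⟩
  · intro z hz
    rw [List.mem_reverse, List.mem_map] at hz
    obtain ⟨y, hy, rfl⟩ := hz
    exact isW_inv V (h2 y hy)
  · rw [← List.prod_inv_reverse, h3]

theorem normY_inv (g : F) : V.normY g⁻¹ = V.normY g :=
  le_antisymm (normY_inv_le V g) (by simpa using normY_inv_le V g⁻¹)

/-- A `W`-piece: a reduced word which is empty or spells a `W`-word. -/
def Wpiece (m : List (Fin 3 × Bool)) : Prop := Rd m ∧ (m = [] ∨ V.IsW (FreeGroup.mk m))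

theorem wpiece_of_infix_isW {z : F} {m : List (Fin 3 × Bool)} (hz : V.IsW z)
    (hm : m <:+: z.toWord) : Wpiece V m := by
  have hrd : Rd m := rd_infix (rd_toWord z) hm
  refine ⟨hrd, ?_⟩
  by_cases hnil : m = []
  · exact Or.inl hnil
  · right
    obtain ⟨hne, n, mm, hmm, hinf⟩ := hz
    refine ⟨?_, n, mm, hmm, ?_⟩
    · intro h
      have := (toWord_mk_rd hrd).symm.trans (by rw [h, toWord_one])
      exact hnil this
    · rw [toWord_mk_rd hrd]
      exact hm.trans hinf

theorem wpiece_infix {m m' : List (Fin 3 × Bool)} (h : Wpiece V m) (hm : m' <:+: m) :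
    Wpiece V m' := by
  by_cases hnil : m' = []
  · exact ⟨by rw [hnil]; rfl, Or.inl hnil⟩
  · rcases h.2 with hmnil | hW
    · rw [hmnil] at hm
      exact absurd (List.eq_nil_of_infix_nil hm) hnil
    · exact wpiece_of_infix_isW V hW (by rw [toWord_mk_rd h.1]; exact hm)

theorem normY_le_pieces : ∀ ms : List (List (Fin 3 × Bool)), (∀ m ∈ ms, Wpiece V m) →
    V.normY (FreeGroup.mk ms.flatten) ≤ ms.length := by
  intro ms
  induction ms with
  | nil => intro _; simp [← one_eq_mk, normY_one]
  | cons m ms ih =>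
    intro hW
    have h1 : FreeGroup.mk ((m :: ms).flatten) = FreeGroup.mk m * FreeGroup.mk ms.flatten := by
      rw [mul_mk]; rfl
    rw [h1]
    calc V.normY (FreeGroup.mk m * FreeGroup.mk ms.flatten)
        ≤ V.normY (FreeGroup.mk m) + V.normY (FreeGroup.mk ms.flatten) := normY_mul_le V _ _
      _ ≤ 1 + ms.length := by
          apply Nat.add_le_add
          · rcases (hW m (List.mem_cons_self)).2 with hnil | hIsW
            · rw [hnil, ← one_eq_mk]
              simp [normY_one V]
            · exact normY_le V ⟨[FreeGroup.mk m], by simp, by simpa using hIsW, by simp⟩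
          · exact ih (fun m' hm' => hW m' (List.mem_cons_of_mem m hm'))
      _ = (m :: ms).length := by simp [add_comm]

theorem suffix_flatten : ∀ ms : List (List (Fin 3 × Bool)), (∀ m ∈ ms, Wpiece V m) →
    ∀ Vv : List (Fin 3 × Bool), Vv <:+ ms.flatten →
    ∃ ms' : List (List (Fin 3 × Bool)), ms'.length ≤ ms.length ∧ (∀ m ∈ ms', Wpiece V m) ∧
      ms'.flatten = Vv := by
  intro ms
  induction ms with
  | nil =>
    intro _ Vv hVv
    simp only [List.flatten_nil] at hVv
    rw [List.suffix_nil] at hVv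
    exact ⟨[], by simp, by simp, by simp [hVv]⟩
  | cons m ms ih =>
    intro hW Vv hVv
    rw [List.flatten_cons] at hVv
    by_cases hle : Vv.length ≤ ms.flatten.length
    · have hsuf : Vv <:+ ms.flatten :=
        List.suffix_of_suffix_length_le hVv (List.suffix_append m ms.flatten) hle
      obtain ⟨ms', h1, h2, h3⟩ := ih (fun m' hm' => hW m' (List.mem_cons_of_mem m hm')) Vv hsuf
      exact ⟨ms', le_trans h1 (by simp), h2, h3⟩
    · obtain ⟨T, hT⟩ := hVv
      have hTm : T <+: m := by
        apply List.prefix_of_prefix_length_le ⟨Vv, hT⟩ (List.prefix_append m ms.flatten)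
        have := congrArg List.length hT
        simp only [List.length_append] at this
        omega
      obtain ⟨S, hS⟩ := hTm
      have hVv2 : Vv = S ++ ms.flatten := by
        apply List.append_cancel_left (as := T)
        rw [hT, ← hS, List.append_assoc]
      refine ⟨S :: ms, by simp, ?_, by rw [List.flatten_cons, hVv2]⟩
      intro m' hm'
      rcases List.mem_cons.1 hm' with h | h
      · rw [h]
        exact wpiece_infix V (hW m (List.mem_cons_self))
          (List.IsSuffix.isInfix ⟨T, hS⟩)
      · exact hW m' (List.mem_cons_of_mem m h)

theorem split_flatten : ∀ ms : List (List (Fin 3 × Bool)), (∀ m ∈ ms, Wpiece V m) →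
    ∀ A B : List (Fin 3 × Bool), ms.flatten = A ++ B →
    ∃ ms₁ ms₂ : List (List (Fin 3 × Bool)), (∀ m ∈ ms₁, Wpiece V m) ∧ (∀ m ∈ ms₂, Wpiece V m) ∧
      ms₁.flatten = A ∧ ms₂.flatten = B ∧ ms₁.length + ms₂.length ≤ ms.length + 1 := by
  intro ms
  induction ms with
  | nil =>
    intro _ A B hAB
    simp only [List.flatten_nil] at hAB
    obtain ⟨hA, hB⟩ := List.append_eq_nil_iff.1 hAB.symm
    exact ⟨[], [], by simp, by simp, by simp [hA], by simp [hB], by simp⟩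
  | cons m ms ih =>
    intro hW A B hAB
    rw [List.flatten_cons] at hAB
    by_cases hle : A.length ≤ m.length
    · have hA : A = m.take A.length := by
        have := congrArg (List.take A.length) hAB
        rw [List.take_append_of_le_length hle, List.take_left] at this
        exact this.symm
      have hB : B = m.drop A.length ++ ms.flatten := by
        have := congrArg (List.drop A.length) hAB
        rw [List.drop_append_of_le_length hle, List.drop_left] at this
        exact this.symm
      refine ⟨[m.take A.length], (m.drop A.length) :: ms, ?_, ?_, by simp [← hA], by
        rw [List.flatten_cons, ← hB],
        by simp only [List.length_cons, List.length_singleton, List.length_nil]; omega⟩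
      · intro m' hm'
        rcases List.mem_cons.1 hm' with h | h
        · rw [h]
          exact wpiece_infix V (hW m (List.mem_cons_self))
            (List.IsPrefix.isInfix (List.take_prefix _ _))
        · simp at h
      · intro m' hm'
        rcases List.mem_cons.1 hm' with h | h
        · rw [h]
          exact wpiece_infix V (hW m (List.mem_cons_self))
            (List.IsSuffix.isInfix (List.drop_suffix _ _))
        · exact hW m' (List.mem_cons_of_mem m h)
    · push_neg at hle
      have hm' : m = A.take m.length := by
        have := congrArg (List.take m.length) hAB
        rw [List.take_left, List.take_append_of_le_length (le_of_lt hle)] at this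
        exact this
      have hFl : ms.flatten = A.drop m.length ++ B := by
        have := congrArg (List.drop m.length) hAB
        rw [List.drop_left, List.drop_append_of_le_length (le_of_lt hle)] at this
        exact this
      obtain ⟨ms₁, ms₂, h1, h2, h3, h4, h5⟩ :=
        ih (fun m' hm' => hW m' (List.mem_cons_of_mem m hm')) (A.drop m.length) B hFl
      refine ⟨m :: ms₁, ms₂, ?_, h2, ?_, h4, by simp only [List.length_cons]; omega⟩
      · intro m' hm'
        rcases List.mem_cons.1 hm' with h | h
        · rw [h]; exact hW m (List.mem_cons_self)
        · exact h1 m' h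
      · rw [List.flatten_cons, h3]
        conv_rhs => rw [← List.take_append_drop m.length A]
        rw [← hm']

theorem decomp_pieces : ∀ l : List F, (∀ z ∈ l, V.IsW z) →
    ∃ ms : List (List (Fin 3 × Bool)), ms.length ≤ l.length ∧ (∀ m ∈ ms, Wpiece V m) ∧
      (l.prod).toWord = ms.flatten := by
  intro l
  induction l with
  | nil => intro _; exact ⟨[], by simp, by simp, by simp [toWord_one]⟩
  | cons s l ih =>
    intro hW
    obtain ⟨ms, h1, h2, h3⟩ := ih (fun z hz => hW z (List.mem_cons_of_mem s hz))
    obtain ⟨U, W, Vv, hU, hWv, hUV⟩ := cancel (rd_toWord s) (rd_toWord l.prod)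
    have htw : ((s :: l).prod).toWord = U ++ Vv := by
      rw [List.prod_cons]
      have : s * l.prod = FreeGroup.mk (s.toWord ++ (l.prod).toWord) := by
        rw [← mul_mk, mk_toWord, mk_toWord]
      rw [this, toWord_mk]
      exact hUV
    have hVsuf : Vv <:+ ms.flatten := by
      rw [← h3, hWv]
      exact ⟨invRev W, rfl⟩
    obtain ⟨ms', hm1, hm2, hm3⟩ := suffix_flatten V ms h2 Vv hVsuf
    refine ⟨U :: ms', by simp; omega, ?_, by rw [htw, List.flatten_cons, hm3]⟩
    intro m' hm'
    rcases List.mem_cons.1 hm' with h | h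
    · rw [h]
      exact wpiece_of_infix_isW V (hW s (List.mem_cons_self))
        (List.IsPrefix.isInfix ⟨W, hU.symm⟩)
    · exact hm2 m' h

/-- Almost superadditivity along splittings of the reduced word. -/
theorem normY_split {h : F} {A B : List (Fin 3 × Bool)} (hsplit : h.toWord = A ++ B) :
    V.normY (FreeGroup.mk A) + V.normY (FreeGroup.mk B) ≤ V.normY h + 1 := by
  obtain ⟨l, hl1, hl2, hl3⟩ := exists_min V h
  obtain ⟨ms, hms1, hms2, hms3⟩ := decomp_pieces V l hl2
  rw [hl3, hsplit] at hms3
  obtain ⟨ms₁, ms₂, h1, h2, h3, h4, h5⟩ := split_flatten V ms hms2 A B hms3.symm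
  calc V.normY (FreeGroup.mk A) + V.normY (FreeGroup.mk B)
      ≤ ms₁.length + ms₂.length := by
        apply Nat.add_le_add
        · rw [← h3]; exact normY_le_pieces V ms₁ h1
        · rw [← h4]; exact normY_le_pieces V ms₂ h2
    _ ≤ ms.length + 1 := h5
    _ ≤ V.normY h + 1 := by omega

end norms

theorem key (V : VSeq) (u v g : F)
    (hij : (lcp u.toWord g.toWord).length ≤ (lcp v.toWord g.toWord).length) :
    V.normY (u⁻¹ * v) + V.normY g ≤ V.normY (u⁻¹ * g) + V.normY v + 4 := by
  set U := u.toWord with hU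
  set Vw := v.toWord with hVw
  set w := g.toWord with hw
  set i := (lcp U w).length with hi
  set j := (lcp Vw w).length with hj
  have hUi : U.take i = w.take i := by
    have e1 : lcp U w = U.take i := List.prefix_iff_eq_take.1 (lcp_prefix_left U w)
    have e2 : lcp U w = w.take i := List.prefix_iff_eq_take.1 (lcp_prefix_right U w)
    rw [← e1, ← e2]
  have hVj : Vw.take j = w.take j := by
    have e1 : lcp Vw w = Vw.take j := List.prefix_iff_eq_take.1 (lcp_prefix_left Vw w)
    have e2 : lcp Vw w = w.take j := List.prefix_iff_eq_take.1 (lcp_prefix_right Vw w)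
    rw [← e1, ← e2]
  have hjw : j ≤ w.length := by
    have := (lcp_prefix_right Vw w).length_le
    omega
  have hwtake_len : (w.take j).length = j := by
    rw [List.length_take]
    omega
  have wsplit : w.take j = w.take i ++ (w.take j).drop i := by
    conv_lhs => rw [← List.take_append_drop i (w.take j)]
    rw [List.take_take, min_eq_left hij]
  have wdropsplit : w.drop i = (w.take j).drop i ++ w.drop j := by
    conv_lhs => rw [← List.take_append_drop j w]
    rw [List.drop_append_of_le_length (by rw [hwtake_len]; exact hij)]
  -- upper bounds
  have hv : v = FreeGroup.mk (w.take i) * FreeGroup.mk ((w.take j).drop i)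
      * FreeGroup.mk (Vw.drop j) := by
    rw [mul_mk, mul_mk, ← wsplit, ← hVj, List.take_append_drop, hVw, mk_toWord]
  have hg : g = FreeGroup.mk (w.take i) * FreeGroup.mk ((w.take j).drop i)
      * FreeGroup.mk (w.drop j) := by
    rw [mul_mk, mul_mk, ← wsplit, List.take_append_drop, hw, mk_toWord]
  have hu : u = FreeGroup.mk (w.take i) * FreeGroup.mk (U.drop i) := by
    rw [mul_mk, ← hUi, List.take_append_drop, hU, mk_toWord]
  have hAinv : FreeGroup.mk (invRev (U.drop i)) = (FreeGroup.mk (U.drop i))⁻¹ := inv_mk.symm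
  have huv : u⁻¹ * v = FreeGroup.mk (invRev (U.drop i)) *
      (FreeGroup.mk ((w.take j).drop i) * FreeGroup.mk (Vw.drop j)) := by
    rw [hAinv]
    conv_lhs => rw [hu, hv]
    group
  have h_uv_le : V.normY (u⁻¹ * v) ≤ V.normY (FreeGroup.mk (invRev (U.drop i)))
      + (V.normY (FreeGroup.mk ((w.take j).drop i)) + V.normY (FreeGroup.mk (Vw.drop j))) := by
    rw [huv]
    exact le_trans (normY_mul_le V _ _) (add_le_add_right (normY_mul_le V _ _) _)
  have h_g_le : V.normY g ≤ V.normY (FreeGroup.mk (w.take i))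
      + (V.normY (FreeGroup.mk ((w.take j).drop i)) + V.normY (FreeGroup.mk (w.drop j))) := by
    conv_lhs => rw [hg]
    refine le_trans (normY_mul_le V _ _) ?_
    have := normY_mul_le V (FreeGroup.mk (w.take i)) (FreeGroup.mk ((w.take j).drop i))
    omega
  -- lower bounds
  have htw1 : (u⁻¹ * g).toWord = invRev (U.drop i) ++ w.drop i := by
    have he : u⁻¹ * g = FreeGroup.mk (invRev (U.drop i) ++ w.drop i) := by
      conv_lhs => rw [← mk_toWord (x := u), ← mk_toWord (x := g)]
      exact inv_mul_mk_drop hUi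
    rw [he]
    apply toWord_mk_rd
    apply rd_invRev_append
      (rd_infix (rd_toWord u) (List.IsSuffix.isInfix (List.drop_suffix _ _)))
      (rd_infix (rd_toWord g) (List.IsSuffix.isInfix (List.drop_suffix _ _)))
    exact fun p q hp hq => lcp_head_ne U w p q hp hq
  have hsplit1 := normY_split V htw1
  have htw2 : (FreeGroup.mk (w.drop i)).toWord = (w.take j).drop i ++ w.drop j := by
    rw [toWord_mk_rd (rd_infix (rd_toWord g) (List.IsSuffix.isInfix (List.drop_suffix _ _)))]
    exact wdropsplit
  have hsplit2 := normY_split V htw2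
  have htw3 : v.toWord = w.take j ++ Vw.drop j := by
    conv_lhs => rw [← hVw, ← List.take_append_drop j Vw]
    rw [hVj]
  have hsplit3 := normY_split V htw3
  have htw4 : (FreeGroup.mk (w.take j)).toWord = w.take i ++ (w.take j).drop i := by
    rw [toWord_mk_rd (rd_infix (rd_toWord g) (List.IsPrefix.isInfix (List.take_prefix _ _)))]
    exact wsplit
  have hsplit4 := normY_split V htw4
  omega


end Helpers

/-- The graph `Y` is Gromov-hyperbolic (four-point condition). -/
theorem stmt0 (V : VSeq) :
    ∃ δ : ℝ, 0 ≤ δ ∧ ∀ x y z t : F,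
      (V.dY x y : ℝ) + (V.dY z t : ℝ) ≤
        max ((V.dY x z : ℝ) + (V.dY y t : ℝ)) ((V.dY x t : ℝ) + (V.dY y z : ℝ)) + δ := by
  refine ⟨4, by norm_num, ?_⟩
  intro x y z t
  set u := z⁻¹ * x with hu
  set v := z⁻¹ * y with hv
  set g := z⁻¹ * t with hg
  have h_xy : V.dY x y = V.normY (u⁻¹ * v) := by
    rw [VSeq.dY]; congr 1; rw [hu, hv]; group
  have h_zt : V.dY z t = V.normY g := by rw [VSeq.dY]
  have h_xt : V.dY x t = V.normY (u⁻¹ * g) := by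
    rw [VSeq.dY]; congr 1; rw [hu, hg]; group
  have h_yt : V.dY y t = V.normY (v⁻¹ * g) := by
    rw [VSeq.dY]; congr 1; rw [hv, hg]; group
  have h_xz : V.dY x z = V.normY u := by
    rw [VSeq.dY, ← normY_inv V u]; congr 1; rw [hu]; group
  have h_yz : V.dY y z = V.normY v := by
    rw [VSeq.dY, ← normY_inv V v]; congr 1; rw [hv]; group
  rw [h_xy, h_zt, h_xt, h_yt, h_xz, h_yz]
  rcases le_total (lcp u.toWord g.toWord).length (lcp v.toWord g.toWord).length with hc | hc
  · have hk := key V u v g hc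
    have hle : (V.normY (u⁻¹ * v) : ℝ) + V.normY g
        ≤ (V.normY (u⁻¹ * g) : ℝ) + V.normY v + 4 := by exact_mod_cast hk
    exact le_trans hle (add_le_add_left (le_max_right _ _) 4)
  · have hk := key V v u g hc
    have hswap : V.normY (v⁻¹ * u) = V.normY (u⁻¹ * v) := by
      rw [← normY_inv V (v⁻¹ * u)]
      congr 1
      group
    rw [hswap] at hk
    have hle : (V.normY (u⁻¹ * v) : ℝ) + V.normY g
        ≤ (V.normY (v⁻¹ * g) : ℝ) + V.normY u + 4 := by exact_mod_cast hk
    refine le_trans hle ?_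
    refine le_trans ?_ (add_le_add_left (le_max_left _ _) 4)
    apply add_le_add_left
    rw [add_comm]

end PurelyLox
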